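/- Let 0 < R_E < R_S be real numbers, let η ∈ [0, π/2], and let u, p be points of EuclideanSpace ℝ (Fin 3) with ‖u‖ = R_E and ‖p‖ = R_S. Then the satellite p lies within the user's service dome of angle η, i.e. ⟪p − u, u⟫ ≥ ‖p − u‖·‖u‖·cos η, if and only if dist u p ≤ √(R_S² − R_E²·sin²η) − R_E·cos η. -/

import Mathlib

open Real

/-- For a user `u` on the Earth sphere of radius `R_E` and a satellite `p` on the
concentric sphere of radius `R_S`, the satellite lies within the user's service dome
of angle `η` (i.e. `⟪p - u, u⟫ ≥ ‖p - u‖ ‖u‖ cos η`) if and only if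
`dist u p ≤ √(R_S² - R_E² sin² η) - R_E cos η`. -/
theorem satellite_in_dome_iff_distance_le
    (R_E R_S : ℝ) (hE : 0 < R_E) (hES : R_E < R_S)
    (η : ℝ) (hη0 : 0 ≤ η) (hη1 : η ≤ π / 2)
    (u p : EuclideanSpace ℝ (Fin 3)) (hu : ‖u‖ = R_E) (hp : ‖p‖ = R_S) :
    (inner ℝ (p - u) u : ℝ) ≥ ‖p - u‖ * ‖u‖ * Real.cos η ↔
      dist u p ≤ Real.sqrt (R_S ^ 2 - R_E ^ 2 * Real.sin η ^ 2) - R_E * Real.cos η := by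
  have hc : 0 ≤ Real.cos η :=
    Real.cos_nonneg_of_mem_Icc ⟨by linarith [Real.pi_pos], hη1⟩
  have hs2 : Real.sin η ^ 2 + Real.cos η ^ 2 = 1 := Real.sin_sq_add_cos_sq η
  set c := Real.cos η with hcdef
  set s := Real.sin η with hsdef
  have hSnn : 0 ≤ R_S ^ 2 - R_E ^ 2 * s ^ 2 := by nlinarith [sq_nonneg (R_E * c)]
  set S := R_S ^ 2 - R_E ^ 2 * s ^ 2 with hSdef
  have hsq : Real.sqrt S ^ 2 = S := Real.sq_sqrt hSnn
  have hsqgt : R_E * c < Real.sqrt S := by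
    rw [show Real.sqrt S = Real.sqrt S from rfl]
    have h1 : (R_E * c) ^ 2 < S := by nlinarith
    exact (Real.lt_sqrt (mul_nonneg hE.le hc)).mpr h1
  have hd : dist u p = ‖p - u‖ := by rw [dist_eq_norm, norm_sub_rev]
  have hinner : (inner ℝ (p - u) u : ℝ) = (R_S ^ 2 - R_E ^ 2 - ‖p - u‖ ^ 2) / 2 := by
    have h1 : ‖p - u‖ ^ 2 = ‖p‖ ^ 2 - 2 * (inner ℝ p u : ℝ) + ‖u‖ ^ 2 :=
      norm_sub_sq_real p u
    have h2 : (inner ℝ (p - u) u : ℝ) = (inner ℝ p u : ℝ) - (inner ℝ u u : ℝ) := by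
      rw [inner_sub_left]
    have h3 : (inner ℝ u u : ℝ) = R_E ^ 2 := by
      rw [real_inner_self_eq_norm_sq, hu]
    rw [hu, hp] at h1
    linarith
  set d := ‖p - u‖ with hddef
  have hd0 : 0 ≤ d := norm_nonneg _
  rw [hd, hinner, hu]
  constructor
  · intro h
    nlinarith [mul_nonneg hd0 hc, mul_nonneg hE.le hc]
  · intro h
    have key : 0 ≤ (Real.sqrt S - R_E * c - d) * (Real.sqrt S + R_E * c + d) := by
      apply mul_nonneg <;> nlinarith [mul_nonneg hE.le hc]
    nlinarith [key]
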